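/- Let ℓ_1, ..., ℓ_n : ℝ^k → ℝ each be convex, differentiable, and λ-smooth, let L(θ) = (1/n) Σᵢ ℓᵢ(θ), and suppose ∇L(θ⋆) = 0. Then (1/n) Σᵢ ‖∇ℓᵢ(θ) − ∇ℓᵢ(θ⋆)‖² ≤ 2λ (L(θ) − L(θ⋆)) for every θ. -/

import Mathlib

open RealInnerProductSpace Set

variable {E : Type*} [NormedAddCommGroup E] [InnerProductSpace ℝ E] [CompleteSpace E]

lemma line_hasDerivAt {f : E → ℝ} {g : E → E} (hg : ∀ x, HasGradientAt f (g x) x)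
    (x v : E) (t : ℝ) :
    HasDerivAt (fun t : ℝ => f (x + t • v)) ⟪g (x + t • v), v⟫ t := by
  have hc : HasDerivAt (fun t : ℝ => x + t • v) v t := by
    simpa using ((hasDerivAt_id t).smul_const v).const_add x
  have hf := ((hg (x + t • v)).hasFDerivAt).comp_hasDerivAt t hc
  simp at hf
  exact hf

lemma grad_ineq {f : E → ℝ} {g : E → E} (hconv : ConvexOn ℝ univ f)
    (hg : ∀ x, HasGradientAt f (g x) x) (x y : E) :
    f y + ⟪g y, x - y⟫ ≤ f x := by
  have hcomp : ConvexOn ℝ univ (fun t : ℝ => f (y + t • (x - y))) := by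
    have h := hconv.comp_affineMap (AffineMap.lineMap y x : ℝ →ᵃ[ℝ] E)
    have he : (fun t : ℝ => f (y + t • (x - y))) = f ∘ (AffineMap.lineMap y x : ℝ →ᵃ[ℝ] E) := by
      funext t
      simp [Function.comp, AffineMap.lineMap_apply_module', add_comm]
    rw [he]
    simpa using h
  have hd : HasDerivAt (fun t : ℝ => f (y + t • (x - y))) ⟪g y, x - y⟫ 0 := by
    have := line_hasDerivAt hg y (x - y) 0
    simpa using this
  have := hcomp.le_slope_of_hasDerivWithinAt_Ioi (mem_univ (0:ℝ)) (mem_univ (1:ℝ))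
    one_pos (hd.hasDerivWithinAt)
  simp [slope_def_field] at this
  linarith

lemma descent {f : E → ℝ} {g : E → E} {lam : ℝ}
    (hg : ∀ x, HasGradientAt f (g x) x)
    (hlip : ∀ x y, ‖g x - g y‖ ≤ lam * ‖x - y‖) (x y : E) :
    f y ≤ f x + ⟪g x, y - x⟫ + lam / 2 * ‖y - x‖ ^ 2 := by
  set φ : ℝ → ℝ := fun t =>
    f x + t * ⟪g x, y - x⟫ + lam * t ^ 2 / 2 * ‖y - x‖ ^ 2 - f (x + t • (y - x)) with hφ
  have hd : ∀ t : ℝ, HasDerivAt φ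
      (⟪g x, y - x⟫ + lam * t * ‖y - x‖ ^ 2 - ⟪g (x + t • (y - x)), y - x⟫) t := by
    intro t
    have h1 := line_hasDerivAt hg x (y - x) t
    have h2 : HasDerivAt (fun t : ℝ =>
        f x + t * ⟪g x, y - x⟫ + lam * t ^ 2 / 2 * ‖y - x‖ ^ 2)
        (⟪g x, y - x⟫ + lam * t * ‖y - x‖ ^ 2) t := by
      have ha : HasDerivAt (fun t : ℝ => t * ⟪g x, y - x⟫) ⟪g x, y - x⟫ t := by
        simpa using (hasDerivAt_id t).mul_const ⟪g x, y - x⟫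
      have hb : HasDerivAt (fun t : ℝ => lam * t ^ 2 / 2 * ‖y - x‖ ^ 2)
          (lam * t * ‖y - x‖ ^ 2) t := by
        have : HasDerivAt (fun t : ℝ => t ^ 2) (2 * t) t := by
          simpa using hasDerivAt_pow 2 t
        have := (((this.const_mul lam).div_const 2).mul_const (‖y - x‖ ^ 2))
        exact this.congr_deriv (by ring)
      exact (ha.const_add (f x)).add hb
    exact h2.sub h1
  have hmono : MonotoneOn φ (Icc (0:ℝ) 1) := by
    apply monotoneOn_of_deriv_nonneg (convex_Icc 0 1)
    · exact (fun t _ => ((hd t).differentiableAt.continuousAt.continuousWithinAt))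
    · exact fun t _ => ((hd t).differentiableAt.differentiableWithinAt)
    · intro t ht
      rw [interior_Icc] at ht
      rw [(hd t).deriv]
      have hCS : ⟪g (x + t • (y - x)) - g x, y - x⟫ ≤
          ‖g (x + t • (y - x)) - g x‖ * ‖y - x‖ := real_inner_le_norm _ _
      have hln : ‖g (x + t • (y - x)) - g x‖ ≤ lam * (t * ‖y - x‖) := by
        have := hlip (x + t • (y - x)) x
        simpa [norm_smul, abs_of_nonneg ht.1.le] using this
      have h0 : ‖y - x‖ ≥ 0 := norm_nonneg _
      have : ⟪g (x + t • (y - x)) - g x, y - x⟫ ≤ lam * t * ‖y - x‖ ^ 2 := by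
        calc ⟪g (x + t • (y - x)) - g x, y - x⟫ ≤ ‖g (x + t • (y - x)) - g x‖ * ‖y - x‖ := hCS
        _ ≤ lam * (t * ‖y - x‖) * ‖y - x‖ := by
            apply mul_le_mul_of_nonneg_right hln h0
        _ = lam * t * ‖y - x‖ ^ 2 := by ring
      rw [inner_sub_left] at this
      linarith
  have h01 := hmono (left_mem_Icc.mpr zero_le_one) (right_mem_Icc.mpr zero_le_one) zero_le_one
  simp [hφ] at h01
  linarith

lemma cocoercive {f : E → ℝ} {g : E → E} {lam : ℝ} (hlam : 0 < lam)
    (hconv : ConvexOn ℝ univ f)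
    (hg : ∀ x, HasGradientAt f (g x) x)
    (hlip : ∀ x y, ‖g x - g y‖ ≤ lam * ‖x - y‖) (x y : E) :
    ‖g x - g y‖ ^ 2 ≤ 2 * lam * (f x - f y - ⟪g y, x - y⟫) := by
  set z : E := x - (1 / lam) • (g x - g y) with hz
  have h1 : f z ≤ f x + ⟪g x, z - x⟫ + lam / 2 * ‖z - x‖ ^ 2 := descent hg hlip x z
  have h2 : f y + ⟪g y, z - y⟫ ≤ f z := grad_ineq hconv hg z y
  have hzx : z - x = -((1 / lam) • (g x - g y)) := by rw [hz]; abel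
  have e1 : ⟪g x, z - x⟫ = -(1 / lam) * ⟪g x, g x - g y⟫ := by
    rw [hzx, inner_neg_right, real_inner_smul_right]; ring
  have e2 : ‖z - x‖ ^ 2 = (1 / lam) ^ 2 * ‖g x - g y‖ ^ 2 := by
    rw [hzx, norm_neg, norm_smul]
    simp [abs_of_pos (one_div_pos.mpr hlam), mul_pow]
  have e3 : ⟪g y, z - y⟫ = ⟪g y, x - y⟫ - (1 / lam) * ⟪g y, g x - g y⟫ := by
    have : z - y = (x - y) - (1 / lam) • (g x - g y) := by rw [hz]; abel
    rw [this, inner_sub_right, real_inner_smul_right]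
  have e4 : ⟪g x, g x - g y⟫ - ⟪g y, g x - g y⟫ = ‖g x - g y‖ ^ 2 := by
    rw [← inner_sub_left, real_inner_self_eq_norm_sq]
  have hlam' : (0:ℝ) < 1 / lam := one_div_pos.mpr hlam
  rw [e1, e2] at h1
  rw [e3] at h2
  have key : (1 / lam) * ‖g x - g y‖ ^ 2 - lam / 2 * ((1/lam)^2 * ‖g x - g y‖ ^ 2)
      ≤ f x - f y - ⟪g y, x - y⟫ := by nlinarith [e4]
  have : (1 / lam) * ‖g x - g y‖ ^ 2 - lam / 2 * ((1/lam)^2 * ‖g x - g y‖ ^ 2)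
      = ‖g x - g y‖ ^ 2 / (2 * lam) := by
    field_simp; ring
  rw [this] at key
  rw [div_le_iff₀ (by positivity)] at key
  linarith [key]


theorem stmt_2 {k n : ℕ} (hn : 0 < n)
    (ℓ : Fin n → EuclideanSpace ℝ (Fin k) → ℝ)
    (g : Fin n → EuclideanSpace ℝ (Fin k) → EuclideanSpace ℝ (Fin k)) (lam : ℝ)
    (hconv : ∀ i, ConvexOn ℝ Set.univ (ℓ i))
    (hgrad : ∀ i x, HasGradientAt (ℓ i) (g i x) x)
    (hlip : ∀ i x y, ‖g i x - g i y‖ ≤ lam * ‖x - y‖)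
    (L : EuclideanSpace ℝ (Fin k) → ℝ)
    (hL : ∀ θ, L θ = (1 / (n : ℝ)) * ∑ i, ℓ i θ)
    (θs : EuclideanSpace ℝ (Fin k))
    (hstat : (1 / (n : ℝ)) • ∑ i, g i θs = 0) :
    ∀ θ, (1 / (n : ℝ)) * ∑ i, ‖g i θ - g i θs‖ ^ 2 ≤ 2 * lam * (L θ - L θs) := by

  intro θ
  have hn' : (0:ℝ) < (n:ℝ) := Nat.cast_pos.mpr hn
  rcases lt_trichotomy lam 0 with hlam | hlam | hlam
  · -- lam < 0 : then θ = θs necessarily, otherwise contradiction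
    have hθ : θ = θs := by
      by_contra hne
      have h0 : 0 < ‖θ - θs‖ := by
        simpa [sub_eq_zero] using norm_pos_iff.mpr (sub_ne_zero.mpr hne)
      have := hlip ⟨0, hn⟩ θ θs
      nlinarith [norm_nonneg (g ⟨0, hn⟩ θ - g ⟨0, hn⟩ θs)]
    subst hθ
    simp
  · -- lam = 0 : all gradients coincide
    subst hlam
    have hz : ∀ i : Fin n, g i θ - g i θs = 0 := by
      intro i
      have := hlip i θ θs
      rw [zero_mul] at this
      exact norm_le_zero_iff.mp this
    simp [hz]
  · -- lam > 0 : the real case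
    have key : ∀ i : Fin n, ‖g i θ - g i θs‖ ^ 2 ≤
        2 * lam * (ℓ i θ - ℓ i θs - ⟪g i θs, θ - θs⟫) := fun i =>
      cocoercive hlam (hconv i) (hgrad i) (hlip i) θ θs
    have hsum : ∑ i, ‖g i θ - g i θs‖ ^ 2 ≤
        2 * lam * ((∑ i, ℓ i θ) - (∑ i, ℓ i θs) - ⟪∑ i, g i θs, θ - θs⟫) := by
      calc ∑ i, ‖g i θ - g i θs‖ ^ 2
          ≤ ∑ i, 2 * lam * (ℓ i θ - ℓ i θs - ⟪g i θs, θ - θs⟫) :=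
            Finset.sum_le_sum fun i _ => key i
        _ = 2 * lam * ((∑ i, ℓ i θ) - (∑ i, ℓ i θs) - ⟪∑ i, g i θs, θ - θs⟫) := by
            rw [← Finset.mul_sum, Finset.sum_sub_distrib, Finset.sum_sub_distrib,
              sum_inner]
    have hstat' : (∑ i, g i θs) = 0 := by
      have h1 : (1 / (n:ℝ)) ≠ 0 := by positivity
      exact (smul_eq_zero.mp hstat).resolve_left h1
    rw [hstat'] at hsum
    simp only [inner_zero_left, sub_zero] at hsum
    rw [hL, hL]
    have := mul_le_mul_of_nonneg_left hsum (le_of_lt (one_div_pos.mpr hn'))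
    calc (1 / (n:ℝ)) * ∑ i, ‖g i θ - g i θs‖ ^ 2
        ≤ (1 / (n:ℝ)) * (2 * lam * ((∑ i, ℓ i θ) - ∑ i, ℓ i θs)) := this
      _ = 2 * lam * (1 / (n:ℝ) * ∑ i, ℓ i θ - 1 / (n:ℝ) * ∑ i, ℓ i θs) := by ring
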